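/- Let I = [b, c] ⊆ [0,1] and let s ∈ [0,1). Then ∫₀¹ μ(I ∩ [0, frac(s + x)]) dx = (c − b) − (c² − b²)/2, where frac denotes the fractional part and μ is Lebesgue measure. -/

import Mathlib

open MeasureTheory Set

lemma vol_aux (b c : ℝ) (hb : 0 ≤ b) (y : ℝ) :
    (volume (Icc b c ∩ Icc 0 y)).toReal = max (min c y - b) 0 := by
  rw [Icc_inter_Icc, Real.volume_Icc, max_eq_left hb, ENNReal.toReal_ofReal']

theorem stmt_14 (b c s : ℝ) (hb : 0 ≤ b) (hbc : b ≤ c) (hc : c ≤ 1)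
    (hs : s ∈ Ico (0:ℝ) 1) :
    ∫ x in (0:ℝ)..1,
        (volume (Icc b c ∩ Icc 0 (Int.fract (s + x)))).toReal
      = (c - b) - (c ^ 2 - b ^ 2) / 2 := by
  have key : ∀ x : ℝ, (volume (Icc b c ∩ Icc 0 (Int.fract (s + x)))).toReal
      = max (min c (Int.fract (s + x)) - b) 0 := fun x => vol_aux b c hb _
  simp only [key]
  set g : ℝ → ℝ := fun x => max (min c (Int.fract (s + x)) - b) 0 with hg
  have hper : Function.Periodic g 1 := by
    intro x
    simp only [hg]
    rw [show s + (x + 1) = (s + x) + 1 by ring, Int.fract_add_one]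
  have h1 : ∫ x in (0:ℝ)..1, g x = ∫ x in (-s)..(-s + 1), g x := by
    simpa using hper.intervalIntegral_add_eq 0 (-s)
  have h2 : ∫ x in (-s)..(-s + 1), g x = ∫ y in (0:ℝ)..1, g (y - s) := by
    rw [intervalIntegral.integral_comp_sub_right]
    rw [show (0:ℝ) - s = -s by ring, show (1:ℝ) - s = -s + 1 by ring]
  have h3 : ∫ y in (0:ℝ)..1, g (y - s) = ∫ y in (0:ℝ)..1, max (min c y - b) 0 := by
    apply intervalIntegral.integral_congr_ae
    have h1m : ∀ᵐ y : ℝ, y ≠ 1 := by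
      have : (volume {(1:ℝ)}) = 0 := Real.volume_singleton
      exact measure_mono_null (fun y hy => by simpa using hy) this
    filter_upwards [h1m] with y hy hyI
    rw [uIoc_of_le (by norm_num : (0:ℝ) ≤ 1)] at hyI
    have hy1 : y < 1 := lt_of_le_of_ne hyI.2 hy
    simp only [hg]
    rw [show s + (y - s) = y by ring, Int.fract_eq_self.2 ⟨le_of_lt hyI.1, hy1⟩]
  rw [h1, h2, h3]
  have hF : Continuous fun y : ℝ => max (min c y - b) 0 := by fun_prop
  have i1 : IntervalIntegrable (fun y : ℝ => max (min c y - b) 0) volume 0 b :=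
    hF.intervalIntegrable _ _
  have i2 : IntervalIntegrable (fun y : ℝ => max (min c y - b) 0) volume b c :=
    hF.intervalIntegrable _ _
  have i3 : IntervalIntegrable (fun y : ℝ => max (min c y - b) 0) volume c 1 :=
    hF.intervalIntegrable _ _
  rw [← intervalIntegral.integral_add_adjacent_intervals (i1.trans i2) i3,
    ← intervalIntegral.integral_add_adjacent_intervals i1 i2]
  have e1 : ∫ y in (0:ℝ)..b, max (min c y - b) 0 = 0 := by
    rw [intervalIntegral.integral_congr (g := fun _ => (0:ℝ))]
    · simp
    · intro y hy
      rw [uIcc_of_le hb] at hy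
      have : min c y - b ≤ 0 := by
        have : min c y ≤ b := le_trans (min_le_right _ _) hy.2
        linarith
      simp [max_eq_right this]
  have e2 : ∫ y in b..c, max (min c y - b) 0 = ∫ y in b..c, (y - b) := by
    apply intervalIntegral.integral_congr
    intro y hy
    rw [uIcc_of_le hbc] at hy
    show max (min c y - b) 0 = y - b
    rw [min_eq_right hy.2, max_eq_left (by linarith [hy.1])]
  have e3 : ∫ y in c..(1:ℝ), max (min c y - b) 0 = ∫ y in c..(1:ℝ), (c - b) := by
    apply intervalIntegral.integral_congr
    intro y hy
    rw [uIcc_of_le hc] at hy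
    show max (min c y - b) 0 = c - b
    rw [min_eq_left hy.1, max_eq_left (by linarith)]
  rw [e1, e2, e3]
  have emid : (∫ y in b..c, (y - b)) = (c ^ 2 - b ^ 2) / 2 - (c - b) * b := by
    rw [intervalIntegral.integral_sub intervalIntegral.intervalIntegrable_id
      (intervalIntegrable_const (c := b)),
      integral_id, intervalIntegral.integral_const]
    simp only [smul_eq_mul]
  rw [emid, intervalIntegral.integral_const]
  simp only [smul_eq_mul]
  ring
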